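/- If [A | a] and [b ; B] are totally unimodular matrices (where a is a column of A's block and b is a row of B's block), then their 2-sum [[A, ab], [0, B]] is totally unimodular, where ab denotes the outer product of column vector a and row vector b. -/

import Mathlib

open Matrix

private lemma signRange_eq : Set.range (SignType.cast : SignType → ℝ) = ({0, 1, -1} : Set ℝ) := by
  ext x
  constructor
  · rintro ⟨s, rfl⟩
    cases s <;> simp
  · rintro (rfl | rfl | rfl)
    exacts [⟨0, by simp⟩, ⟨1, by simp⟩, ⟨-1, by simp⟩]

private lemma range_neg_mem {x : ℝ} (hx : x ∈ Set.range (SignType.cast : SignType → ℝ)) :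
    -x ∈ Set.range (SignType.cast : SignType → ℝ) := by
  obtain ⟨s, rfl⟩ := hx
  exact ⟨-s, by rw [SignType.coe_neg]⟩

private lemma range_mul_mem {x y : ℝ} (hx : x ∈ Set.range (SignType.cast : SignType → ℝ))
    (hy : y ∈ Set.range (SignType.cast : SignType → ℝ)) :
    x * y ∈ Set.range (SignType.cast : SignType → ℝ) := by
  obtain ⟨s, rfl⟩ := hx
  obtain ⟨t, rfl⟩ := hy
  exact ⟨s * t, by rw [SignType.coe_mul]⟩

/-- Changing the row-matching equivalence only changes the determinant by a sign. -/
private lemma det_reindex_mem {R C : Type} [Fintype R] [Fintype C] [DecidableEq R] [DecidableEq C]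
    (N : Matrix R C ℝ) (e e' : R ≃ C)
    (h : (N.submatrix ⇑e'.symm id).det ∈ Set.range (SignType.cast : SignType → ℝ)) :
    (N.submatrix ⇑e.symm id).det ∈ Set.range (SignType.cast : SignType → ℝ) := by
  have key : N.submatrix ⇑e.symm id
      = (N.submatrix ⇑e'.symm id).submatrix ⇑(e.symm.trans e') id := by
    ext c c'
    simp
  rw [key, Matrix.det_permute]
  rcases Int.units_eq_one_or (Equiv.Perm.sign (e.symm.trans e')) with hs | hs
  · rw [hs]
    simpa using h
  · rw [hs]
    simpa using range_neg_mem h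

private lemma submatrix_mul_split {R I C : Type} [Fintype R] [Fintype I] [Fintype C]
    (S : Matrix R I ℝ) (T : Matrix I C ℝ) (e : R ≃ C) (eI : I ≃ C) :
    ((S * T).submatrix ⇑e.symm id) = (S.submatrix ⇑e.symm ⇑eI.symm) * (T.submatrix ⇑eI.symm id) := by
  ext c c'
  simp only [submatrix_apply, Matrix.mul_apply, id_eq]
  exact Fintype.sum_equiv eI (fun i => S (e.symm c) i * T i c')
    (fun x => S (e.symm c) (eI.symm x) * T (eI.symm x) c') (fun i => by simp)

private lemma core {R₁ R₂ C₁ C₂ : Type} [Fintype R₁] [Fintype R₂] [Fintype C₁] [Fintype C₂]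
    [DecidableEq R₁] [DecidableEq R₂] [DecidableEq C₁] [DecidableEq C₂]
    (X : Matrix R₁ C₁ ℝ) (u : R₁ → ℝ) (Y : Matrix R₂ C₂ ℝ) (v : C₂ → ℝ)
    (hX : (fromCols X (replicateCol Unit u)).IsTotallyUnimodular)
    (hY : (fromRows (replicateRow Unit v) Y).IsTotallyUnimodular)
    (e : (R₁ ⊕ R₂) ≃ (C₁ ⊕ C₂)) :
    ((fromBlocks X (vecMulVec u v) 0 Y).submatrix ⇑e.symm id).det
      ∈ Set.range (SignType.cast : SignType → ℝ) := by
  have hcard : Fintype.card R₁ + Fintype.card R₂ = Fintype.card C₁ + Fintype.card C₂ := by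
    simpa using Fintype.card_congr e
  rcases lt_trichotomy (Fintype.card R₁) (Fintype.card C₁) with h | h | h
  · -- too many columns in the left block : column dependence, det = 0
    have hdep : ¬ LinearIndependent ℝ (fun c₁ : C₁ => (fun r₁ : R₁ => X r₁ c₁)) := by
      intro hli
      have := hli.fintype_card_le_finrank
      rw [Module.finrank_pi] at this
      omega
    obtain ⟨c, hc, c₀, hc₀⟩ := Fintype.not_linearIndependent_iff.mp hdep
    have hc' : ∀ r₁ : R₁, ∑ c₁ : C₁, c c₁ * X r₁ c₁ = 0 := by
      intro r₁
      have := congrFun hc r₁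
      simpa [mul_comm] using this
    have hdet : ((fromBlocks X (vecMulVec u v) 0 Y).submatrix ⇑e.symm id).det = 0 := by
      rw [← Matrix.exists_mulVec_eq_zero_iff]
      refine ⟨Sum.elim c 0, fun h0 => hc₀ (by simpa using congrFun h0 (Sum.inl c₀)), ?_⟩
      funext r
      simp only [Matrix.mulVec, dotProduct, submatrix_apply, id_eq, Pi.zero_apply]
      rw [Fintype.sum_sum_type]
      cases hr : e.symm r with
      | inl r₁ =>
        simp only [fromBlocks_apply₁₁, fromBlocks_apply₁₂, Sum.elim_inl, Sum.elim_inr,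
          mul_zero, Finset.sum_const_zero, add_zero]
        simpa [mul_comm] using hc' r₁
      | inr r₂ => simp
    rw [hdet]
    exact ⟨0, rfl⟩
  · -- square blocks
    have h2 : Fintype.card R₂ = Fintype.card C₂ := by omega
    have α : R₁ ≃ C₁ := Fintype.equivOfCardEq h
    have β : R₂ ≃ C₂ := Fintype.equivOfCardEq h2
    apply det_reindex_mem _ e (α.sumCongr β)
    have key : (fromBlocks X (vecMulVec u v) 0 Y).submatrix ⇑(α.sumCongr β).symm id
        = fromBlocks (X.submatrix ⇑α.symm id) ((vecMulVec u v).submatrix ⇑α.symm id) 0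
            (Y.submatrix ⇑β.symm id) := by
      ext (c₁ | c₂) (d₁ | d₂) <;> rfl
    rw [key, det_fromBlocks_zero₂₁]
    apply range_mul_mem
    · have hXs : X.submatrix ⇑α.symm id
          = (fromCols X (replicateCol Unit u)).submatrix ⇑α.symm Sum.inl := by
        ext i j; rfl
      rw [hXs]
      exact (isTotallyUnimodular_iff_fintype _).mp hX C₁ ⇑α.symm Sum.inl
    · have hYs : Y.submatrix ⇑β.symm id
          = (fromRows (replicateRow Unit v) Y).submatrix (Sum.inr ∘ ⇑β.symm) id := by
        ext i j; rfl
      rw [hYs]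
      exact (isTotallyUnimodular_iff_fintype _).mp hY C₂ (Sum.inr ∘ ⇑β.symm) id
  · by_cases h1 : Fintype.card R₁ = Fintype.card C₁ + 1
    · -- the interesting case: factor the matrix as a product
      have h2 : 1 + Fintype.card R₂ = Fintype.card C₂ := by omega
      have α : R₁ ≃ (C₁ ⊕ Unit) := Fintype.equivOfCardEq (by simpa using h1)
      have β : (Unit ⊕ R₂) ≃ C₂ := Fintype.equivOfCardEq (by simpa using h2)
      set eI : ((C₁ ⊕ Unit) ⊕ R₂) ≃ (C₁ ⊕ C₂) :=
        (Equiv.sumAssoc C₁ Unit R₂).trans (Equiv.sumCongr (Equiv.refl C₁) β) with heI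
      set e' : (R₁ ⊕ R₂) ≃ (C₁ ⊕ C₂) := (Equiv.sumCongr α (Equiv.refl R₂)).trans eI with he'
      apply det_reindex_mem _ e e'
      set S : Matrix (R₁ ⊕ R₂) ((C₁ ⊕ Unit) ⊕ R₂) ℝ :=
        fromBlocks (fromCols X (replicateCol Unit u)) 0 0 (1 : Matrix R₂ R₂ ℝ) with hS
      set T : Matrix ((C₁ ⊕ Unit) ⊕ R₂) (C₁ ⊕ C₂) ℝ :=
        fromBlocks (fromRows (1 : Matrix C₁ C₁ ℝ) (0 : Matrix Unit C₁ ℝ))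
          (fromRows (0 : Matrix C₁ C₂ ℝ) (replicateRow Unit v)) 0 Y with hT
      have hfact : fromBlocks X (vecMulVec u v) 0 Y = S * T := by
        rw [hS, hT, fromBlocks_multiply, fromBlocks_inj]
        refine ⟨?_, ?_, ?_, ?_⟩
        · rw [fromCols_mul_fromRows]
          simp
        · rw [fromCols_mul_fromRows]
          simp [vecMulVec_eq Unit]
        · simp
        · simp
      rw [hfact, submatrix_mul_split S T e' eI, Matrix.det_mul]
      apply range_mul_mem
      · have hS1 : S.submatrix ⇑e'.symm ⇑eI.symm
            = (S.submatrix ⇑(Equiv.sumCongr α.symm (Equiv.refl R₂)) id).submatrix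
                ⇑eI.symm ⇑eI.symm := by
          ext c c'; rfl
        have hS2 : S.submatrix ⇑(Equiv.sumCongr α.symm (Equiv.refl R₂)) id
            = fromBlocks ((fromCols X (replicateCol Unit u)).submatrix ⇑α.symm id) 0 0
                (1 : Matrix R₂ R₂ ℝ) := by
          ext (c | r) (c' | r') <;> rfl
        rw [hS1, det_submatrix_equiv_self, hS2, det_fromBlocks_zero₂₁, det_one, mul_one]
        exact (isTotallyUnimodular_iff_fintype _).mp hX (C₁ ⊕ Unit) ⇑α.symm id
      · have hT1 : T.submatrix ⇑eI.symm id
            = fromBlocks (1 : Matrix C₁ C₁ ℝ) 0 0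
                ((fromRows (replicateRow Unit v) Y).submatrix ⇑β.symm id) := by
          ext (c₁ | c₂) (d₁ | d₂)
          · rfl
          · rfl
          · rcases hb : β.symm c₂ with u0 | r₂ <;>
              simp [heI, Equiv.sumAssoc, hb, hT]
          · rcases hb : β.symm c₂ with u0 | r₂ <;>
              simp [heI, Equiv.sumAssoc, hb, hT]
        rw [hT1, det_fromBlocks_zero₂₁, det_one, one_mul]
        exact (isTotallyUnimodular_iff_fintype _).mp hY C₂ ⇑β.symm id
    · -- too many rows in the top block : row dependence, det = 0
      have hdep : ¬ LinearIndependent ℝ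
          (fun r₁ : R₁ => (fun c : C₁ ⊕ Unit => fromCols X (replicateCol Unit u) r₁ c)) := by
        intro hli
        have := hli.fintype_card_le_finrank
        rw [Module.finrank_pi] at this
        simp only [Fintype.card_sum, Fintype.card_unit] at this
        omega
      obtain ⟨c, hc, r₀, hr₀⟩ := Fintype.not_linearIndependent_iff.mp hdep
      have hc1 : ∀ c₁ : C₁, ∑ r₁ : R₁, c r₁ * X r₁ c₁ = 0 := by
        intro c₁
        have := congrFun hc (Sum.inl c₁)
        simpa [fromCols] using this
      have hc2 : ∑ r₁ : R₁, c r₁ * u r₁ = 0 := by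
        have := congrFun hc (Sum.inr ())
        simpa [fromCols] using this
      have hdet : ((fromBlocks X (vecMulVec u v) 0 Y).submatrix ⇑e.symm id).det = 0 := by
        rw [← Matrix.exists_vecMul_eq_zero_iff]
        refine ⟨fun x => Sum.elim c 0 (e.symm x), ?_, ?_⟩
        · intro h0
          apply hr₀
          simpa using congrFun h0 (e (Sum.inl r₀))
        · funext c'
          simp only [Matrix.vecMul, dotProduct, submatrix_apply, id_eq, Pi.zero_apply]
          have := Fintype.sum_equiv e.symm
            (fun x : C₁ ⊕ C₂ => Sum.elim c 0 (e.symm x) *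
              (fromBlocks X (vecMulVec u v) 0 Y) (e.symm x) c')
            (fun r : R₁ ⊕ R₂ => Sum.elim c 0 r * (fromBlocks X (vecMulVec u v) 0 Y) r c')
            (fun x => rfl)
          rw [this, Fintype.sum_sum_type]
          cases c' with
          | inl c₁ => simpa using hc1 c₁
          | inr c₂ =>
            simp only [Sum.elim_inl, Sum.elim_inr, fromBlocks_apply₁₂, fromBlocks_apply₂₂,
              Pi.zero_apply, zero_mul, Finset.sum_const_zero, add_zero, vecMulVec_apply]
            calc ∑ r₁ : R₁, c r₁ * (u r₁ * v c₂)
                = (∑ r₁ : R₁, c r₁ * u r₁) * v c₂ := by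
                  rw [Finset.sum_mul]; congr 1; funext r₁; ring
              _ = 0 := by rw [hc2, zero_mul]
      rw [hdet]
      exact ⟨0, rfl⟩

private lemma isTU_iff' {m n : Type*} (A : Matrix m n ℝ) :
    (∀ (k : ℕ) (f : Fin k → m) (g : Fin k → n), Function.Injective f → Function.Injective g →
      (A.submatrix f g).det ∈ ({0, 1, -1} : Set ℝ)) ↔ A.IsTotallyUnimodular := by
  unfold Matrix.IsTotallyUnimodular
  simp only [signRange_eq]

/-- A real matrix is totally unimodular if every square submatrix has determinant 0, +1 or -1. -/
def IsTU {m n : Type*} (A : Matrix m n ℝ) : Prop :=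
  ∀ (k : ℕ) (f : Fin k → m) (g : Fin k → n), Function.Injective f → Function.Injective g →
    (A.submatrix f g).det ∈ ({0, 1, -1} : Set ℝ)

private lemma isTU_iff {m n : Type*} (A : Matrix m n ℝ) : IsTU A ↔ A.IsTotallyUnimodular :=
  isTU_iff' A

/-- The 2-sum of the totally unimodular matrices `[A | a]` and `[b ; B]` is the
totally unimodular matrix `[[A, ab], [0, B]]`, where `ab` is the outer product. -/
theorem twoSum_of_TU_is_TU {m₁ n₁ m₂ n₂ : Type*}
    (A : Matrix m₁ n₁ ℝ) (a : m₁ → ℝ) (B : Matrix m₂ n₂ ℝ) (b : n₂ → ℝ)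
    (hA : IsTU (Matrix.fromCols A (Matrix.replicateCol Unit a)))
    (hB : IsTU (Matrix.fromRows (Matrix.replicateRow Unit b) B)) :
    IsTU (Matrix.fromBlocks A (Matrix.vecMulVec a b) 0 B) := by
  classical
  rw [isTU_iff] at hA hB ⊢
  intro k f g hf hg
  set p : Fin k → Prop := fun i => (f i).isLeft with hp
  set q : Fin k → Prop := fun j => (g j).isLeft with hq
  let f₁ : {i // p i} → m₁ := fun i => (f i.1).getLeft i.2
  let f₂ : {i // ¬ p i} → m₂ := fun i => (f i.1).getRight (Sum.not_isLeft.mp i.2)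
  let g₁ : {j // q j} → n₁ := fun j => (g j.1).getLeft j.2
  let g₂ : {j // ¬ q j} → n₂ := fun j => (g j.1).getRight (Sum.not_isLeft.mp j.2)
  set X : Matrix {i // p i} {j // q j} ℝ := A.submatrix f₁ g₁ with hXdef
  set u : {i // p i} → ℝ := a ∘ f₁ with hudef
  set Y : Matrix {i // ¬ p i} {j // ¬ q j} ℝ := B.submatrix f₂ g₂ with hYdef
  set v : {j // ¬ q j} → ℝ := b ∘ g₂ with hvdef
  have hX : (fromCols X (replicateCol Unit u)).IsTotallyUnimodular := by
    have hXe : fromCols X (replicateCol Unit u)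
        = (fromCols A (replicateCol Unit a)).submatrix f₁ (Sum.map g₁ id) := by
      ext i (j | j) <;> rfl
    rw [hXe]
    exact hA.submatrix _ _
  have hY : (fromRows (replicateRow Unit v) Y).IsTotallyUnimodular := by
    have hYe : fromRows (replicateRow Unit v) Y
        = (fromRows (replicateRow Unit b) B).submatrix (Sum.map id f₂) g₂ := by
      ext (i | i) j <;> rfl
    rw [hYe]
    exact hB.submatrix _ _
  set φ : Fin k ≃ ({i // p i} ⊕ {i // ¬ p i}) := (Equiv.sumCompl p).symm with hφ
  set ψ : Fin k ≃ ({j // q j} ⊕ {j // ¬ q j}) := (Equiv.sumCompl q).symm with hψ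
  have key : (fromBlocks A (vecMulVec a b) 0 B).submatrix f g
      = ((fromBlocks X (vecMulVec u v) 0 Y).submatrix ⇑(φ.symm.trans ψ).symm id).submatrix
          ⇑ψ ⇑ψ := by
    ext i j
    have hsymm : (φ.symm.trans ψ).symm (ψ i) = φ i := by simp
    simp only [submatrix_apply, id_eq, hsymm]
    rcases hfi : f i with m | m <;> rcases hgj : g j with n | n
    · have hi : p i := by rw [hp]; simp [hfi]
      have hj : q j := by rw [hq]; simp [hgj]
      rw [hφ, hψ, Equiv.sumCompl_symm_apply_of_pos hi,
        Equiv.sumCompl_symm_apply_of_pos hj]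
      simp only [fromBlocks_apply₁₁, hXdef, submatrix_apply]
      simp [f₁, g₁, hfi, hgj]
    · have hi : p i := by rw [hp]; simp [hfi]
      have hj : ¬ q j := by rw [hq]; simp [hgj]
      rw [hφ, hψ, Equiv.sumCompl_symm_apply_of_pos hi,
        Equiv.sumCompl_symm_apply_of_neg hj]
      simp only [fromBlocks_apply₁₂, vecMulVec_apply, hudef, hvdef, Function.comp_apply]
      simp [f₁, g₂, hfi, hgj]
    · have hi : ¬ p i := by rw [hp]; simp [hfi]
      have hj : q j := by rw [hq]; simp [hgj]
      rw [hφ, hψ, Equiv.sumCompl_symm_apply_of_neg hi,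
        Equiv.sumCompl_symm_apply_of_pos hj]
      simp
    · have hi : ¬ p i := by rw [hp]; simp [hfi]
      have hj : ¬ q j := by rw [hq]; simp [hgj]
      rw [hφ, hψ, Equiv.sumCompl_symm_apply_of_neg hi,
        Equiv.sumCompl_symm_apply_of_neg hj]
      simp only [fromBlocks_apply₂₂, hYdef, submatrix_apply]
      simp [f₂, g₂, hfi, hgj]
  rw [key, det_submatrix_equiv_self]
  exact core X u Y v hX hY (φ.symm.trans ψ)
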